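/- Let (X, μ) be a nonatomic standard Borel probability space and let T be an ergodic automorphism of (X, μ). Then for every sequence ψ : ℕ → ℝ with ψ(N) > 0 for all N and ψ(N) → 0 as N → ∞, there exists a measurable set A ⊆ X such that, writing f = χ_A (the indicator of A) and a = μ(A), one has limsup_{N→∞} ‖f_N(T, ·) − a‖_{L¹(μ)} / ψ(N) = ∞. -/

import Mathlib

open MeasureTheory Filter Set
open scoped symmDiff ENNReal

noncomputable def birkhoffAvg {X : Type*} (T : X → X) (f : X → ℝ) (N : ℕ) (x : X) : ℝ :=
  (N : ℝ)⁻¹ * ∑ i ∈ Finset.Icc 1 N, f (T^[i] x)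

set_option linter.unusedSectionVars false
namespace SlowAux

variable {X : Type*} [MeasurableSpace X] {μ : Measure X} [IsProbabilityMeasure μ]

/-- real indicator -/
noncomputable def χ (S : Set X) : X → ℝ := S.indicator fun _ => 1

lemma χ_comp (S : Set X) (f : X → X) (x : X) : χ S (f x) = χ (f ⁻¹' S) x := by
  by_cases h : f x ∈ S <;> simp [χ, Set.indicator_apply, Set.mem_preimage, h]

lemma abs_χ_sub_χ (A A' : Set X) (x : X) : |χ A x - χ A' x| = χ (A ∆ A') x := by
  by_cases h : x ∈ A <;> by_cases h' : x ∈ A' <;>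
    simp [χ, Set.indicator_apply, h, h', Set.mem_symmDiff, abs_of_nonneg, abs_of_nonpos]

lemma χ_union_sub_diff (A B : Set X) (x : X) : χ (A ∪ B) x - χ (A \ B) x = χ B x := by
  by_cases h : x ∈ A <;> by_cases h' : x ∈ B <;>
    simp [χ, Set.indicator_apply, h, h']

lemma measurable_χ {S : Set X} (hS : MeasurableSet S) : Measurable (χ S) :=
  (measurable_const.indicator hS)

lemma integrable_χ {S : Set X} (hS : MeasurableSet S) : Integrable (χ S) μ :=
  (integrable_const (1 : ℝ)).indicator hS

lemma integral_χ {S : Set X} (hS : MeasurableSet S) : ∫ x, χ S x ∂μ = (μ S).toReal := by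
  rw [χ]
  rw [integral_indicator_const (1 : ℝ) hS]
  simp [Measure.real]

lemma measurable_iterate (T : X ≃ᵐ X) (i : ℕ) : Measurable (T^[i]) := by
  induction i with
  | zero => simpa using measurable_id
  | succ n ih => rw [Function.iterate_succ]; exact ih.comp T.measurable

lemma birk_eq (T : X ≃ᵐ X) (B : Set X) (N : ℕ) :
    birkhoffAvg T (χ B) N = fun x => (N : ℝ)⁻¹ * ∑ i ∈ Finset.Icc 1 N, χ ((T^[i]) ⁻¹' B) x :=
  funext fun x => by simp only [birkhoffAvg, χ_comp]

lemma integrable_birk (T : X ≃ᵐ X) {B : Set X} (hB : MeasurableSet B) (N : ℕ) :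
    Integrable (birkhoffAvg T (χ B) N) μ := by
  rw [birk_eq]
  exact (integrable_finset_sum _ fun i _ =>
    integrable_χ ((measurable_iterate T i) hB)).const_mul _

lemma integral_birk (T : X ≃ᵐ X) (hpres : MeasurePreserving T μ μ) {B : Set X}
    (hB : MeasurableSet B) {N : ℕ} (hN : 1 ≤ N) :
    ∫ x, birkhoffAvg T (χ B) N x ∂μ = (μ B).toReal := by
  rw [birk_eq]
  rw [integral_const_mul]
  rw [integral_finset_sum _ fun i _ => integrable_χ ((measurable_iterate T i) hB)]
  have : ∀ i ∈ Finset.Icc 1 N, ∫ x, χ ((T^[i]) ⁻¹' B) x ∂μ = (μ B).toReal := by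
    intro i _
    rw [integral_χ ((measurable_iterate T i) hB),
      (hpres.iterate i).measure_preimage hB.nullMeasurableSet]
  rw [Finset.sum_congr rfl this, Finset.sum_const, Nat.card_Icc]
  have hN0 : (N : ℝ) ≠ 0 := Nat.cast_ne_zero.mpr (Nat.one_le_iff_ne_zero.mp hN)
  simp only [Nat.add_sub_cancel, nsmul_eq_mul]
  field_simp


lemma abs_birk_sub_birk_le (T : X → X) (f g h : X → ℝ) (hfg : ∀ y, |f y - g y| ≤ h y)
    (N : ℕ) (x : X) :
    |birkhoffAvg T f N x - birkhoffAvg T g N x| ≤ birkhoffAvg T h N x := by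
  unfold birkhoffAvg
  rw [← mul_sub, ← Finset.sum_sub_distrib, abs_mul, abs_inv, Nat.abs_cast]
  refine mul_le_mul_of_nonneg_left ?_ (inv_nonneg.mpr (Nat.cast_nonneg N))
  exact (Finset.abs_sum_le_sum_abs _ _).trans (Finset.sum_le_sum fun i _ => hfg _)

lemma birk_nonneg (T : X → X) (f : X → ℝ) (hf : ∀ y, 0 ≤ f y) (N : ℕ) (x : X) :
    0 ≤ birkhoffAvg T f N x :=
  mul_nonneg (inv_nonneg.mpr (Nat.cast_nonneg N)) (Finset.sum_nonneg fun i _ => hf _)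

/-- The L¹ deviation functional. -/
noncomputable def Idev (μ : Measure X) (T : X ≃ᵐ X) (N : ℕ) (A : Set X) : ℝ :=
  ∫ x, |birkhoffAvg T (A.indicator (fun _ => (1 : ℝ))) N x - (μ A).toReal| ∂μ

lemma Idev_eq (T : X ≃ᵐ X) (N : ℕ) (A : Set X) :
    Idev μ T N A = ∫ x, |birkhoffAvg T (χ A) N x - (μ A).toReal| ∂μ := rfl

lemma integrable_dev (T : X ≃ᵐ X) {A : Set X} (hA : MeasurableSet A) (N : ℕ) :
    Integrable (fun x => |birkhoffAvg T (χ A) N x - (μ A).toReal|) μ :=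
  ((integrable_birk T hA N).sub (integrable_const _)).abs

lemma Idev_nonneg (T : X ≃ᵐ X) (N : ℕ) (A : Set X) : 0 ≤ Idev μ T N A :=
  integral_nonneg fun x => abs_nonneg _

lemma toReal_measure_sub_le {A A' : Set X} :
    |(μ A).toReal - (μ A').toReal| ≤ (μ (A ∆ A')).toReal := by
  have h1 : ∀ S S' : Set X, μ S ≤ μ S' + μ (S ∆ S') := by
    intro S S'
    refine le_trans (measure_mono ?_) (measure_union_le _ _)
    intro x hx
    by_cases h : x ∈ S' <;> simp [h, Set.mem_symmDiff, hx]
  have hfin : ∀ S : Set X, μ S ≠ ⊤ := fun S => measure_ne_top μ S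
  have key : ∀ S S' : Set X, (μ S).toReal - (μ S').toReal ≤ (μ (S ∆ S')).toReal := by
    intro S S'
    have h2 : (μ S).toReal ≤ (μ S').toReal + (μ (S ∆ S')).toReal := by
      rw [← ENNReal.toReal_add (hfin S') (hfin _)]
      exact ENNReal.toReal_mono (by finiteness) (h1 S S')
    linarith
  rw [abs_sub_le_iff]
  exact ⟨key A A', by rw [symmDiff_comm]; exact key A' A⟩

lemma Idev_lip (T : X ≃ᵐ X) (hpres : MeasurePreserving T μ μ) {A A' : Set X}
    (hA : MeasurableSet A) (hA' : MeasurableSet A') {N : ℕ} (hN : 1 ≤ N) :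
    Idev μ T N A' ≤ Idev μ T N A + 2 * (μ (A ∆ A')).toReal := by
  set c : ℝ := (μ (A ∆ A')).toReal with hc
  have hΔ : MeasurableSet (A ∆ A') := hA.symmDiff hA'
  have pt : ∀ x, |birkhoffAvg T (χ A') N x - (μ A').toReal| ≤
      |birkhoffAvg T (χ A) N x - (μ A).toReal|
        + (birkhoffAvg T (χ (A ∆ A')) N x + c) := by
    intro x
    have h1 : |birkhoffAvg T (χ A') N x - birkhoffAvg T (χ A) N x| ≤
        birkhoffAvg T (χ (A ∆ A')) N x := by
      refine abs_birk_sub_birk_le T _ _ _ (fun y => ?_) N x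
      rw [abs_χ_sub_χ, symmDiff_comm]
    have h2 : |(μ A).toReal - (μ A').toReal| ≤ c := toReal_measure_sub_le
    have := abs_sub_abs_le_abs_sub (birkhoffAvg T (χ A') N x - (μ A').toReal)
      (birkhoffAvg T (χ A) N x - (μ A).toReal)
    have h3 : birkhoffAvg T (χ A') N x - (μ A').toReal =
        (birkhoffAvg T (χ A) N x - (μ A).toReal) +
        ((birkhoffAvg T (χ A') N x - birkhoffAvg T (χ A) N x) +
         ((μ A).toReal - (μ A').toReal)) := by ring
    calc |birkhoffAvg T (χ A') N x - (μ A').toReal|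
        ≤ |birkhoffAvg T (χ A) N x - (μ A).toReal| +
          |(birkhoffAvg T (χ A') N x - birkhoffAvg T (χ A) N x) +
           ((μ A).toReal - (μ A').toReal)| := by rw [h3]; exact abs_add_le _ _
      _ ≤ |birkhoffAvg T (χ A) N x - (μ A).toReal| +
            (birkhoffAvg T (χ (A ∆ A')) N x + c) := by
          refine add_le_add le_rfl ?_
          exact (abs_add_le _ _).trans (add_le_add h1 h2)
  have hint : Idev μ T N A' ≤ ∫ x, (|birkhoffAvg T (χ A) N x - (μ A).toReal|
      + (birkhoffAvg T (χ (A ∆ A')) N x + c)) ∂μ := by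
    rw [Idev_eq]
    exact integral_mono (integrable_dev T hA' N)
      ((integrable_dev T hA N).add ((integrable_birk T hΔ N).add (integrable_const _))) pt
  have hbc : Integrable (fun x => birkhoffAvg T (χ (A ∆ A')) N x + c) μ :=
    (integrable_birk T hΔ N).add (integrable_const _)
  rw [integral_add (integrable_dev T hA N) hbc,
    integral_add (integrable_birk T hΔ N) (integrable_const _),
    integral_birk T hpres hΔ hN, integral_const] at hint
  simp only [probReal_univ, smul_eq_mul, one_mul] at hint
  rw [← Idev_eq T N A] at hint
  linarith [hint]

lemma integral_abs_χ_sub_const {B : Set X} (hB : MeasurableSet B) :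
    ∫ x, |χ B x - (μ B).toReal| ∂μ
      = 2 * (μ B).toReal * (1 - (μ B).toReal) := by
  set b : ℝ := (μ B).toReal with hb
  have hb0 : 0 ≤ b := ENNReal.toReal_nonneg
  have hb1 : b ≤ 1 := by
    rw [hb, ← ENNReal.toReal_one]
    exact ENNReal.toReal_mono ENNReal.one_ne_top (prob_le_one)
  have pt : ∀ x, |χ B x - b| = (1 - 2 * b) * χ B x + b := by
    intro x
    by_cases h : x ∈ B
    · simp only [χ, Set.indicator_apply, h, if_pos]
      rw [Set.indicator_of_mem h]
      rw [abs_of_nonneg (by linarith)]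
      ring
    · simp only [χ]
      rw [Set.indicator_of_notMem h]
      rw [zero_sub, abs_neg, abs_of_nonneg hb0]
      ring
  rw [integral_congr_ae (Filter.Eventually.of_forall pt)]
  rw [integral_add ((integrable_χ hB).const_mul _) (integrable_const _),
    integral_const_mul, integral_χ hB, integral_const]
  simp only [probReal_univ, smul_eq_mul, one_mul, ← hb]
  ring

lemma measure_iter_symmDiff_le (T : X ≃ᵐ X) (hpres : MeasurePreserving T μ μ)
    {B : Set X} (hB : MeasurableSet B) (i : ℕ) :
    μ (((T^[i]) ⁻¹' B) ∆ B) ≤ (i : ℝ≥0∞) * μ ((T ⁻¹' B) ∆ B) := by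
  induction i with
  | zero => simp
  | succ n ih =>
    have h1 : ((T^[n+1]) ⁻¹' B) ∆ B ⊆
        (((T^[n+1]) ⁻¹' B) ∆ ((T^[n]) ⁻¹' B)) ∪ (((T^[n]) ⁻¹' B) ∆ B) :=
      symmDiff_triangle _ _ _
    have h2 : ((T^[n+1]) ⁻¹' B) ∆ ((T^[n]) ⁻¹' B) = (T^[n]) ⁻¹' ((T ⁻¹' B) ∆ B) := by
      rw [Set.preimage_symmDiff]
      congr 1
      rw [Function.iterate_succ']
      rfl
    have h3 : μ ((T^[n]) ⁻¹' ((T ⁻¹' B) ∆ B)) = μ ((T ⁻¹' B) ∆ B) :=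
      (hpres.iterate n).measure_preimage
        ((T.measurable hB).symmDiff hB).nullMeasurableSet
    calc μ (((T^[n+1]) ⁻¹' B) ∆ B) ≤ μ ((T^[n]) ⁻¹' ((T ⁻¹' B) ∆ B)) + μ (((T^[n]) ⁻¹' B) ∆ B) := by
          rw [← h2]; exact (measure_mono h1).trans (measure_union_le _ _)
      _ ≤ μ ((T ⁻¹' B) ∆ B) + (n : ℝ≥0∞) * μ ((T ⁻¹' B) ∆ B) := by
          rw [h3]; exact add_le_add le_rfl ih
      _ = ((n + 1 : ℕ) : ℝ≥0∞) * μ ((T ⁻¹' B) ∆ B) := by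
          push_cast; ring

lemma integral_abs_birk_sub_χ (T : X ≃ᵐ X) (hpres : MeasurePreserving T μ μ)
    {B : Set X} (hB : MeasurableSet B) {N : ℕ} (hN : 1 ≤ N) :
    ∫ x, |birkhoffAvg T (χ B) N x - χ B x| ∂μ
      ≤ (N : ℝ) * (μ ((T ⁻¹' B) ∆ B)).toReal := by
  set d : ℝ := (μ ((T ⁻¹' B) ∆ B)).toReal with hd
  have hd0 : 0 ≤ d := ENNReal.toReal_nonneg
  have hN0 : (N : ℝ) ≠ 0 := Nat.cast_ne_zero.mpr (Nat.one_le_iff_ne_zero.mp hN)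
  have hDmeas : ∀ i : ℕ, MeasurableSet (((T^[i]) ⁻¹' B) ∆ B) := fun i =>
    ((measurable_iterate T i) hB).symmDiff hB
  have pt : ∀ x, |birkhoffAvg T (χ B) N x - χ B x| ≤
      (N : ℝ)⁻¹ * ∑ i ∈ Finset.Icc 1 N, χ (((T^[i]) ⁻¹' B) ∆ B) x := by
    intro x
    have hrw : χ B x = (N : ℝ)⁻¹ * ∑ _i ∈ Finset.Icc 1 N, χ B x := by
      rw [Finset.sum_const, Nat.card_Icc, Nat.add_sub_cancel, nsmul_eq_mul]
      field_simp
    rw [birkhoffAvg, hrw, ← mul_sub, ← Finset.sum_sub_distrib, abs_mul, abs_inv, Nat.abs_cast]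
    refine mul_le_mul_of_nonneg_left ?_ (inv_nonneg.mpr (Nat.cast_nonneg N))
    refine (Finset.abs_sum_le_sum_abs _ _).trans (Finset.sum_le_sum fun i _ => ?_)
    rw [χ_comp B (T^[i]) x, abs_χ_sub_χ]
  have hint : ∫ x, |birkhoffAvg T (χ B) N x - χ B x| ∂μ ≤
      ∫ x, (N : ℝ)⁻¹ * ∑ i ∈ Finset.Icc 1 N, χ (((T^[i]) ⁻¹' B) ∆ B) x ∂μ := by
    refine integral_mono ((integrable_birk T hB N).sub (integrable_χ hB)).abs ?_ pt
    exact (integrable_finset_sum _ fun i _ => integrable_χ (hDmeas i)).const_mul _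
  refine hint.trans ?_
  rw [integral_const_mul, integral_finset_sum _ fun i _ => integrable_χ (hDmeas i)]
  have hterm : ∀ i ∈ Finset.Icc 1 N, ∫ x, χ (((T^[i]) ⁻¹' B) ∆ B) x ∂μ ≤ (N : ℝ) * d := by
    intro i hi
    rw [integral_χ (hDmeas i)]
    have h1 : μ (((T^[i]) ⁻¹' B) ∆ B) ≤ (i : ℝ≥0∞) * μ ((T ⁻¹' B) ∆ B) :=
      measure_iter_symmDiff_le T hpres hB i
    have h2 : (μ (((T^[i]) ⁻¹' B) ∆ B)).toReal ≤ (i : ℝ) * d := by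
      have hne : (i : ℝ≥0∞) * μ ((T ⁻¹' B) ∆ B) ≠ ⊤ :=
        ENNReal.mul_ne_top (ENNReal.natCast_ne_top i) (measure_ne_top μ _)
      have := ENNReal.toReal_mono hne h1
      rwa [ENNReal.toReal_mul, ENNReal.toReal_natCast] at this
    refine h2.trans ?_
    have hiN : (i : ℝ) ≤ (N : ℝ) := by exact_mod_cast (Finset.mem_Icc.mp hi).2
    exact mul_le_mul_of_nonneg_right hiN hd0
  calc (N : ℝ)⁻¹ * ∑ i ∈ Finset.Icc 1 N, ∫ x, χ (((T^[i]) ⁻¹' B) ∆ B) x ∂μ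
      ≤ (N : ℝ)⁻¹ * ∑ _i ∈ Finset.Icc 1 N, (N : ℝ) * d := by
        refine mul_le_mul_of_nonneg_left (Finset.sum_le_sum hterm)
          (inv_nonneg.mpr (Nat.cast_nonneg N))
    _ = (N : ℝ) * d := by
        rw [Finset.sum_const, Nat.card_Icc, Nat.add_sub_cancel, nsmul_eq_mul]
        field_simp

lemma dev_step (T : X ≃ᵐ X) (hpres : MeasurePreserving T μ μ) {A B : Set X}
    (hA : MeasurableSet A) (hB : MeasurableSet B) {N : ℕ} (hN : 1 ≤ N) {β : ℝ}
    (hβpos : 0 < β) (hβ : β ≤ 1 / 4)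
    (hb1 : β / 2 ≤ (μ B).toReal) (hb2 : (μ B).toReal ≤ β)
    (hd : (N : ℝ) * (μ ((T ⁻¹' B) ∆ B)).toReal ≤ β / 4) :
    β / 4 ≤ Idev μ T N (A ∪ B) ∨ β / 4 ≤ Idev μ T N (A \ B) := by
  set b : ℝ := (μ B).toReal with hbdef
  set a₁ : ℝ := (μ (A ∪ B)).toReal with ha₁
  set a₂ : ℝ := (μ (A \ B)).toReal with ha₂
  have hab : a₁ = a₂ + b := by
    rw [ha₁, ha₂, hbdef, ← ENNReal.toReal_add (measure_ne_top μ _) (measure_ne_top μ _)]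
    congr 1
    rw [← measure_union (disjoint_sdiff_self_left) hB, Set.diff_union_self]
  have hbirk : ∀ x, birkhoffAvg T (χ (A ∪ B)) N x - birkhoffAvg T (χ (A \ B)) N x
      = birkhoffAvg T (χ B) N x := by
    intro x
    unfold birkhoffAvg
    rw [← mul_sub, ← Finset.sum_sub_distrib]
    congr 1
    exact Finset.sum_congr rfl fun i _ => χ_union_sub_diff A B (T^[i] x)
  have pt : ∀ x, |χ B x - b| ≤ |birkhoffAvg T (χ B) N x - χ B x|
      + (|birkhoffAvg T (χ (A ∪ B)) N x - a₁| + |birkhoffAvg T (χ (A \ B)) N x - a₂|) := by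
    intro x
    have key : (birkhoffAvg T (χ (A ∪ B)) N x - a₁) - (birkhoffAvg T (χ (A \ B)) N x - a₂)
        = birkhoffAvg T (χ B) N x - b := by
      rw [← hbirk x]; rw [hab]; ring
    have h1 : |birkhoffAvg T (χ B) N x - b| ≤
        |birkhoffAvg T (χ (A ∪ B)) N x - a₁| + |birkhoffAvg T (χ (A \ B)) N x - a₂| := by
      rw [← key]
      exact abs_sub _ _
    have h2 : |χ B x - b| ≤ |χ B x - birkhoffAvg T (χ B) N x| + |birkhoffAvg T (χ B) N x - b| :=
      abs_sub_le _ _ _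
    rw [abs_sub_comm (χ B x) (birkhoffAvg T (χ B) N x)] at h2
    linarith
  have hints : ∫ x, |χ B x - b| ∂μ ≤
      (∫ x, |birkhoffAvg T (χ B) N x - χ B x| ∂μ)
        + (Idev μ T N (A ∪ B) + Idev μ T N (A \ B)) := by
    have hi1 : Integrable (fun x => |birkhoffAvg T (χ B) N x - χ B x|) μ :=
      ((integrable_birk T hB N).sub (integrable_χ hB)).abs
    have hi2 : Integrable (fun x => |birkhoffAvg T (χ (A ∪ B)) N x - a₁|) μ :=
      integrable_dev (μ := μ) T (hA.union hB) N
    have hi3 : Integrable (fun x => |birkhoffAvg T (χ (A \ B)) N x - a₂|) μ :=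
      integrable_dev (μ := μ) T (hA.diff hB) N
    have hi23 : Integrable (fun x => |birkhoffAvg T (χ (A ∪ B)) N x - a₁|
        + |birkhoffAvg T (χ (A \ B)) N x - a₂|) μ := hi2.add hi3
    calc ∫ x, |χ B x - b| ∂μ
        ≤ ∫ x, (|birkhoffAvg T (χ B) N x - χ B x|
            + (|birkhoffAvg T (χ (A ∪ B)) N x - a₁| + |birkhoffAvg T (χ (A \ B)) N x - a₂|)) ∂μ := by
          refine integral_mono (((integrable_χ hB).sub (integrable_const _)).abs)
            (hi1.add hi23) pt
      _ = _ := by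
          rw [integral_add hi1 hi23, integral_add hi2 hi3, Idev_eq, Idev_eq]
  have hlow : 3 * β / 4 ≤ ∫ x, |χ B x - b| ∂μ := by
    rw [integral_abs_χ_sub_const hB, ← hbdef]
    nlinarith [hb1, hb2, hβ, hβpos]
  have herr := integral_abs_birk_sub_χ T hpres hB hN
  by_contra hcon
  push_neg at hcon
  obtain ⟨hc1, hc2⟩ := hcon
  linarith

lemma exists_Iic_small (ν : Measure ℝ) [IsProbabilityMeasure ν] [NullSingletonClass ν] {δ : ℝ≥0∞}
    (hδ0 : 0 < δ) (hδ1 : δ < 1) : ∃ t : ℝ, 0 < ν (Iic t) ∧ ν (Iic t) ≤ δ := by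
  set s : Set ℝ := {t : ℝ | ν (Iic t) ≤ δ} with hs
  have hmono : ∀ t u : ℝ, t ≤ u → ν (Iic t) ≤ ν (Iic u) := fun t u h =>
    measure_mono (Iic_subset_Iic.mpr h)
  have hs_ne : s.Nonempty := by
    by_contra hne
    push_neg at hne
    have hall : ∀ t : ℝ, δ < ν (Iic t) := by
      intro t
      by_contra h
      have hts : t ∈ s := Set.mem_setOf.mpr (not_lt.mp h)
      rw [hne] at hts
      exact Set.notMem_empty t hts
    have hempty : ⋂ n : ℕ, Iic (-(n : ℝ)) = ∅ := by
      ext x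
      simp only [Set.mem_iInter, Set.mem_Iic, Set.mem_empty_iff_false, iff_false, not_forall,
        not_le]
      obtain ⟨n, hn⟩ := exists_nat_gt (-x)
      exact ⟨n, by linarith⟩
    have htend : Tendsto (fun n : ℕ => ν (Iic (-(n : ℝ)))) atTop (nhds 0) := by
      have := tendsto_measure_iInter_atTop (μ := ν) (s := fun n : ℕ => Iic (-(n : ℝ)))
        (fun n => measurableSet_Iic.nullMeasurableSet)
        (fun n m hnm => Iic_subset_Iic.mpr (by exact_mod_cast neg_le_neg (by exact_mod_cast hnm)))
        ⟨0, measure_ne_top ν _⟩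
      rwa [hempty, measure_empty] at this
    have := ge_of_tendsto' htend (fun n => (hall _).le)
    exact absurd (this.trans_lt hδ0).false (by simp)
  have hbdd : BddAbove s := by
    by_contra hnb
    have hall : ∀ t : ℝ, ν (Iic t) ≤ δ := by
      intro t
      obtain ⟨u, hu, htu⟩ := not_bddAbove_iff.mp hnb t
      exact (hmono t u htu.le).trans hu
    have huniv : ⋃ n : ℕ, Iic (n : ℝ) = univ := by
      ext x
      simp only [Set.mem_iUnion, Set.mem_Iic, Set.mem_univ, iff_true]
      obtain ⟨n, hn⟩ := exists_nat_gt x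
      exact ⟨n, hn.le⟩
    have htend : Tendsto (fun n : ℕ => ν (Iic (n : ℝ))) atTop (nhds (ν univ)) := by
      have := tendsto_measure_iUnion_atTop (μ := ν) (s := fun n : ℕ => Iic (n : ℝ))
        (fun n m hnm => Iic_subset_Iic.mpr (by exact_mod_cast hnm))
      rwa [huniv] at this
    have h1 : ν univ ≤ δ := le_of_tendsto' htend (fun n => hall _)
    rw [measure_univ] at h1
    exact absurd (h1.trans_lt hδ1).false (by simp)
  set t₀ : ℝ := sSup s with ht₀
  have hlow : ∀ t : ℝ, t < t₀ → ν (Iic t) ≤ δ := by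
    intro t ht
    obtain ⟨u, hu, htu⟩ := exists_lt_of_lt_csSup hs_ne ht
    exact (hmono t u htu.le).trans hu
  have hIio : ν (Iio t₀) ≤ δ := by
    have hub : Iio t₀ = ⋃ n : ℕ, Iic (t₀ - 1 / ((n : ℝ) + 1)) := by
      ext x
      simp only [Set.mem_Iio, Set.mem_iUnion, Set.mem_Iic]
      constructor
      · intro hx
        obtain ⟨n, hn⟩ := exists_nat_one_div_lt (sub_pos.mpr hx)
        exact ⟨n, by linarith⟩
      · rintro ⟨n, hn⟩
        have : 0 < 1 / ((n : ℝ) + 1) := by positivity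
        linarith
    have hmon : Monotone (fun n : ℕ => Iic (t₀ - 1 / ((n : ℝ) + 1))) := by
      intro n m hnm
      refine Iic_subset_Iic.mpr ?_
      have h0 : ((n : ℝ) + 1) ≤ ((m : ℝ) + 1) := by exact_mod_cast Nat.succ_le_succ hnm
      have h1 : 1 / ((m : ℝ) + 1) ≤ 1 / ((n : ℝ) + 1) :=
        one_div_le_one_div_of_le (by positivity) h0
      linarith
    rw [hub, hmon.measure_iUnion]
    refine iSup_le fun n => hlow _ (by
      have : 0 < 1 / ((n : ℝ) + 1) := by positivity
      linarith)
  have ht₀mem : ν (Iic t₀) ≤ δ := by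
    have : Iic t₀ ⊆ Iio t₀ ∪ {t₀} := fun x hx => by
      rcases lt_or_eq_of_le (Set.mem_Iic.mp hx) with h | h
      · exact Or.inl h
      · exact Or.inr (by simp [h])
    calc ν (Iic t₀) ≤ ν (Iio t₀) + ν {t₀} := (measure_mono this).trans (measure_union_le _ _)
      _ = ν (Iio t₀) := by rw [measure_singleton, add_zero]
      _ ≤ δ := hIio
  rcases eq_or_lt_of_le (zero_le : 0 ≤ ν (Iic t₀)) with h0 | hpos
  swap
  · exact ⟨t₀, hpos, ht₀mem⟩
  · exfalso
    have hgt : ∀ t : ℝ, t₀ < t → δ < ν (Iic t) := by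
      intro t ht
      by_contra h
      exact absurd (le_csSup hbdd (Set.mem_setOf.mpr (not_lt.mp h))) (not_le.mpr ht)
    have hioc : ∀ n : ℕ, δ ≤ ν (Ioc t₀ (t₀ + 1 / ((n : ℝ) + 1))) := by
      intro n
      have h1 : 0 < 1 / ((n : ℝ) + 1) := by positivity
      have h2 := hgt (t₀ + 1 / ((n : ℝ) + 1)) (by linarith)
      have hsub : Iic (t₀ + 1 / ((n : ℝ) + 1)) ⊆ Iic t₀ ∪ Ioc t₀ (t₀ + 1 / ((n : ℝ) + 1)) := by
        intro x hx
        rcases le_or_gt x t₀ with h | h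
        · exact Or.inl h
        · exact Or.inr ⟨h, Set.mem_Iic.mp hx⟩
      calc δ ≤ ν (Iic (t₀ + 1 / ((n : ℝ) + 1))) := h2.le
        _ ≤ ν (Iic t₀) + ν (Ioc t₀ (t₀ + 1 / ((n : ℝ) + 1))) :=
            (measure_mono hsub).trans (measure_union_le _ _)
        _ = ν (Ioc t₀ (t₀ + 1 / ((n : ℝ) + 1))) := by rw [← h0, zero_add]
    have hempty : ⋂ n : ℕ, Ioc t₀ (t₀ + 1 / ((n : ℝ) + 1)) = ∅ := by
      ext x
      simp only [Set.mem_iInter, Set.mem_Ioc, Set.mem_empty_iff_false, iff_false, not_forall]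
      by_cases hx : t₀ < x
      · obtain ⟨n, hn⟩ := exists_nat_one_div_lt (sub_pos.mpr hx)
        exact ⟨n, fun h => absurd h.2 (by linarith)⟩
      · exact ⟨0, fun h => hx h.1⟩
    have htend : Tendsto (fun n : ℕ => ν (Ioc t₀ (t₀ + 1 / ((n : ℝ) + 1)))) atTop (nhds 0) := by
      have := tendsto_measure_iInter_atTop (μ := ν)
        (s := fun n : ℕ => Ioc t₀ (t₀ + 1 / ((n : ℝ) + 1)))
        (fun n => measurableSet_Ioc.nullMeasurableSet)
        (fun n m hnm => Ioc_subset_Ioc le_rfl (by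
          have : ((n : ℝ) + 1) ≤ ((m : ℝ) + 1) := by exact_mod_cast Nat.succ_le_succ hnm
          have h1 : 1 / ((m : ℝ) + 1) ≤ 1 / ((n : ℝ) + 1) :=
            one_div_le_one_div_of_le (by positivity) this
          linarith))
        ⟨0, measure_ne_top ν _⟩
      rwa [hempty, measure_empty] at this
    have := ge_of_tendsto' htend hioc
    exact absurd (this.trans_lt hδ0).false (by simp)

lemma exists_small_set (μ : Measure X) [IsProbabilityMeasure μ] [NullSingletonClass μ]
    [StandardBorelSpace X] {δ : ℝ≥0∞} (hδ0 : 0 < δ) (hδ1 : δ < 1) :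
    ∃ E : Set X, MeasurableSet E ∧ 0 < μ E ∧ μ E ≤ δ := by
  have hXc : ¬Countable X := by
    intro h
    have : μ (univ : Set X) = 0 := Set.countable_univ.measure_zero μ
    rw [measure_univ] at this
    simp at this
  let e : X ≃ᵐ ℝ := PolishSpace.measurableEquivOfNotCountable hXc
    (not_countable_iff.mpr inferInstance)
  set ν : Measure ℝ := μ.map e with hν
  haveI : IsProbabilityMeasure ν := Measure.isProbabilityMeasure_map e.measurable.aemeasurable
  haveI : NullSingletonClass ν := by
    constructor
    intro x
    rw [hν, Measure.map_apply e.measurable (measurableSet_singleton x)]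
    have : e ⁻¹' {x} = {e.symm x} := by
      ext y
      simp only [Set.mem_preimage, Set.mem_singleton_iff]
      exact ⟨fun h => by simp [← h], fun h => by simp [h]⟩
    rw [this]
    exact measure_singleton _
  obtain ⟨t, ht1, ht2⟩ := exists_Iic_small ν hδ0 hδ1
  refine ⟨e ⁻¹' (Iic t), e.measurable measurableSet_Iic, ?_, ?_⟩
  · rwa [← Measure.map_apply e.measurable measurableSet_Iic]
  · rwa [← Measure.map_apply e.measurable measurableSet_Iic]

lemma exists_almost_invariant [StandardBorelSpace X] [NullSingletonClass μ] (T : X ≃ᵐ X)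
    (hT : Ergodic T μ) {β ε : ℝ} (hβ0 : 0 < β) (hβ : β ≤ 1 / 4) (hε : 0 < ε) :
    ∃ B : Set X, MeasurableSet B ∧ β / 2 ≤ (μ B).toReal ∧ (μ B).toReal ≤ β ∧
      (μ ((T ⁻¹' B) ∆ B)).toReal ≤ ε := by
  classical
  have hpres : MeasurePreserving T μ μ := hT.toMeasurePreserving
  set δr : ℝ := min (β / 2) (ε / 3) with hδr
  have hδr0 : 0 < δr := lt_min (by linarith) (by linarith)
  have hδrβ : δr ≤ β / 2 := min_le_left _ _
  have hδrε : δr ≤ ε / 3 := min_le_right _ _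
  obtain ⟨E, hEmeas, hE0, hEδ⟩ := exists_small_set μ (δ := ENNReal.ofReal δr)
    (ENNReal.ofReal_pos.mpr hδr0) (ENNReal.ofReal_lt_one.mpr (by linarith))
  set P : ℕ → Set X := fun j => (T^[j]) ⁻¹' E with hP
  have hPmeas : ∀ j, MeasurableSet (P j) := fun j => (measurable_iterate T j) hEmeas
  have hP0 : P 0 = E := by simp [hP]
  set S : ℕ → Set X := fun j => P j \ ⋃ i, ⋃ (_ : i < j), P i with hS
  have hSmeas : ∀ j, MeasurableSet (S j) := fun j =>
    (hPmeas j).diff (MeasurableSet.iUnion fun i => MeasurableSet.iUnion fun _ => hPmeas i)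
  have hS0 : S 0 = E := by
    rw [hS]
    simp [hP0]
  have hSsub : ∀ j, S j ⊆ P j := fun j => Set.diff_subset
  have hit : ∀ (i : ℕ) (x : X), T^[i] (T x) = T^[i + 1] x := fun i x =>
    (Function.iterate_succ_apply T i x).symm
  have hSsucc : ∀ j, S (j + 1) = T ⁻¹' (S j) \ E := by
    intro j
    ext x
    simp only [hS, hP, Set.mem_diff, Set.mem_preimage, Set.mem_iUnion]
    constructor
    · rintro ⟨h1, h2⟩
      refine ⟨⟨by rwa [hit j x], ?_⟩, ?_⟩
      · rintro ⟨i, hi, hx⟩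
        rw [hit i x] at hx
        exact h2 ⟨i + 1, Nat.succ_lt_succ hi, hx⟩
      · intro hxE
        exact h2 ⟨0, Nat.succ_pos j, by simpa using hxE⟩
    · rintro ⟨⟨h1, h2⟩, h3⟩
      rw [hit j x] at h1
      refine ⟨h1, ?_⟩
      rintro ⟨i, hi, hx⟩
      cases i with
      | zero => exact h3 (by simpa using hx)
      | succ i =>
        rw [← hit i x] at hx
        exact h2 ⟨i, Nat.lt_of_succ_lt_succ hi, hx⟩
  have hμS_succ_le : ∀ j, μ (S (j + 1)) ≤ μ (S j) := by
    intro j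
    have hsub : S (j + 1) ⊆ T ⁻¹' (S j) := by rw [hSsucc]; exact Set.diff_subset
    exact (measure_mono hsub).trans_eq (hpres.measure_preimage (hSmeas j).nullMeasurableSet)
  have hμS_le : ∀ j, μ (S j) ≤ ENNReal.ofReal δr := by
    intro j
    have : μ (S j) ≤ μ E := by
      induction j with
      | zero => rw [hS0]
      | succ n ih => exact (hμS_succ_le n).trans ih
    exact this.trans hEδ
  have hdisjS : ∀ i j, i < j → Disjoint (S i) (S j) := by
    intro i j hij
    refine Set.disjoint_left.mpr fun x hxi hxj => ?_
    exact hxj.2 (Set.mem_iUnion.mpr ⟨i, Set.mem_iUnion.mpr ⟨hij, hSsub i hxi⟩⟩)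
  set V : Set X := ⋃ j, P j with hV
  have hVmeas : MeasurableSet V := MeasurableSet.iUnion hPmeas
  have hVpre : T ⁻¹' V ⊆ V := by
    intro x hx
    obtain ⟨j, hj⟩ := Set.mem_iUnion.mp hx
    refine Set.mem_iUnion.mpr ⟨j + 1, ?_⟩
    have : T^[j] (T x) ∈ E := hj
    rwa [hit j x] at this
  have hμV : μ V = 1 := by
    rcases hT.ae_empty_or_univ_of_preimage_ae_le hVmeas.nullMeasurableSet
      hVpre.eventuallyLE with h | h
    · exfalso
      have h0 : μ V = 0 := by
        rw [measure_congr h, measure_empty]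
      have : μ E ≤ μ V := measure_mono (hP0 ▸ Set.subset_iUnion P 0)
      rw [h0] at this
      exact absurd (le_antisymm this zero_le) (ne_of_gt hE0)
    · rw [measure_congr h, measure_univ]
  have hcover : V ⊆ ⋃ j, S j := by
    intro x hx
    have hex : ∃ j, x ∈ P j := Set.mem_iUnion.mp hx
    refine Set.mem_iUnion.mpr ⟨Nat.find hex, ⟨Nat.find_spec hex, ?_⟩⟩
    intro hmem
    obtain ⟨i, hi⟩ := Set.mem_iUnion.mp hmem
    obtain ⟨hij, hPi⟩ := Set.mem_iUnion.mp hi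
    exact Nat.find_min hex hij hPi
  set B : ℕ → Set X := fun L => ⋃ j ∈ Finset.Icc 1 L, S j with hBdef
  have hBmeas : ∀ L, MeasurableSet (B L) := fun L =>
    (Finset.Icc 1 L).measurableSet_biUnion (fun j _ => hSmeas j)
  have hBmono : Monotone B := by
    intro L L' hLL'
    refine Set.iUnion₂_subset fun j hj => ?_
    exact Set.subset_iUnion₂ (s := fun j _ => S j) j
      (Finset.mem_Icc.mpr ⟨(Finset.mem_Icc.mp hj).1, (Finset.mem_Icc.mp hj).2.trans hLL'⟩)
  have hVsub : V ⊆ E ∪ ⋃ L, B L := by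
    intro x hx
    obtain ⟨j, hj⟩ := Set.mem_iUnion.mp (hcover hx)
    cases j with
    | zero => exact Or.inl (hS0 ▸ hj)
    | succ n =>
      refine Or.inr (Set.mem_iUnion.mpr ⟨n + 1, ?_⟩)
      exact Set.mem_biUnion (Finset.mem_Icc.mpr ⟨Nat.succ_pos n, le_rfl⟩) hj
  have hexL : ∃ L, ENNReal.ofReal (β / 2) < μ (B L) := by
    by_contra hle
    push_neg at hle
    have hWle : μ (⋃ L, B L) ≤ ENNReal.ofReal (β / 2) := by
      rw [hBmono.measure_iUnion]
      exact iSup_le hle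
    have h1 : (1 : ℝ≥0∞) ≤ μ E + μ (⋃ L, B L) := by
      rw [← hμV]
      exact (measure_mono hVsub).trans (measure_union_le _ _)
    have h2 : (1 : ℝ≥0∞) ≤ ENNReal.ofReal δr + ENNReal.ofReal (β / 2) :=
      h1.trans (add_le_add hEδ hWle)
    rw [← ENNReal.ofReal_add hδr0.le (by linarith)] at h2
    have h3 : (1 : ℝ≥0∞) < 1 := h2.trans_lt (ENNReal.ofReal_lt_one.mpr (by linarith))
    exact absurd h3 (lt_irrefl _)
  set L₀ : ℕ := Nat.find hexL with hL₀def
  have hL₀ : ENNReal.ofReal (β / 2) < μ (B L₀) := Nat.find_spec hexL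
  have hB0 : B 0 = ∅ := by
    rw [hBdef]
    simp
  have hL₀pos : 0 < L₀ := by
    rcases Nat.eq_zero_or_pos L₀ with h | h
    · exfalso
      rw [h, hB0, measure_empty] at hL₀
      exact absurd hL₀ (not_lt.mpr zero_le)
    · exact h
  have hprev : ¬ ENNReal.ofReal (β / 2) < μ (B (L₀ - 1)) :=
    Nat.find_min hexL (Nat.sub_lt hL₀pos one_pos)
  have hsplit : B L₀ ⊆ B (L₀ - 1) ∪ S L₀ := by
    intro x hx
    obtain ⟨j, hj, hxj⟩ := Set.mem_iUnion₂.mp hx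
    rcases eq_or_lt_of_le (Finset.mem_Icc.mp hj).2 with h | h
    · exact Or.inr (h ▸ hxj)
    · refine Or.inl (Set.mem_biUnion (Finset.mem_Icc.mpr
        ⟨(Finset.mem_Icc.mp hj).1, ?_⟩) hxj)
      omega
  have hμBL₀ : μ (B L₀) ≤ ENNReal.ofReal β := by
    have h1 : μ (B L₀) ≤ μ (B (L₀ - 1)) + μ (S L₀) :=
      (measure_mono hsplit).trans (measure_union_le _ _)
    have h2 : μ (B L₀) ≤ ENNReal.ofReal (β / 2) + ENNReal.ofReal δr :=
      h1.trans (add_le_add (not_lt.mp hprev) (hμS_le L₀))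
    refine h2.trans ?_
    rw [← ENNReal.ofReal_add (by linarith) hδr0.le]
    exact ENNReal.ofReal_le_ofReal (by linarith)
  have hBfin : μ (B L₀) ≠ ⊤ := measure_ne_top μ _
  have hb_up : (μ (B L₀)).toReal ≤ β := ENNReal.toReal_le_of_le_ofReal hβ0.le hμBL₀
  have hb_lo : β / 2 ≤ (μ (B L₀)).toReal := by
    have := ENNReal.toReal_mono hBfin hL₀.le
    rwa [ENNReal.toReal_ofReal (by linarith)] at this
  have hsymm : (T ⁻¹' (B L₀)) ∆ B L₀ ⊆ E ∪ (S 1 ∪ S (L₀ + 1)) := by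
    intro x hx
    rcases Set.mem_symmDiff.mp hx with ⟨hx1, hx2⟩ | ⟨hx1, hx2⟩
    · obtain ⟨j, hj, hTx⟩ := Set.mem_iUnion₂.mp (Set.mem_preimage.mp hx1)
      by_cases hxE : x ∈ E
      · exact Or.inl hxE
      · have hxS : x ∈ S (j + 1) := by
          rw [hSsucc]
          exact ⟨Set.mem_preimage.mpr hTx, hxE⟩
        obtain ⟨hj1, hj2⟩ := Finset.mem_Icc.mp hj
        rcases eq_or_lt_of_le hj2 with h | h
        · exact Or.inr (Or.inr (h ▸ hxS))
        · exfalso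
          exact hx2 (Set.mem_biUnion (Finset.mem_Icc.mpr ⟨by omega, by omega⟩) hxS)
    · obtain ⟨j, hj, hxj⟩ := Set.mem_iUnion₂.mp hx1
      obtain ⟨hj1, hj2⟩ := Finset.mem_Icc.mp hj
      cases j with
      | zero => omega
      | succ m =>
        cases Nat.eq_zero_or_pos m with
        | inl h0 =>
          subst h0
          exact Or.inr (Or.inl hxj)
        | inr hm =>
          exfalso
          have hxm : x ∈ T ⁻¹' (S m) := by
            rw [hSsucc] at hxj
            exact hxj.1
          refine hx2 (Set.mem_preimage.mpr ?_)
          exact Set.mem_biUnion (Finset.mem_Icc.mpr ⟨hm, by omega⟩) (Set.mem_preimage.mp hxm)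
  have hμsymm : (μ ((T ⁻¹' (B L₀)) ∆ B L₀)).toReal ≤ ε := by
    have h1 : μ ((T ⁻¹' (B L₀)) ∆ B L₀) ≤ ENNReal.ofReal δr +
        (ENNReal.ofReal δr + ENNReal.ofReal δr) := by
      refine (measure_mono hsymm).trans ?_
      refine (measure_union_le _ _).trans ?_
      exact add_le_add hEδ ((measure_union_le _ _).trans (add_le_add (hμS_le 1) (hμS_le _)))
    rw [← ENNReal.ofReal_add hδr0.le hδr0.le, ← ENNReal.ofReal_add hδr0.le (by linarith)] at h1
    have := ENNReal.toReal_le_of_le_ofReal (by linarith) h1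
    linarith
  exact ⟨B L₀, hBmeas L₀, hb_lo, hb_up, hμsymm⟩

/-- The scale sequence. -/
noncomputable def βf (k : ℕ) : ℝ := (16 : ℝ)⁻¹ ^ (k + 1)

lemma βf_pos (k : ℕ) : 0 < βf k := pow_pos (by norm_num) _

lemma βf_le (k : ℕ) : βf k ≤ 1 / 4 := by
  have h1 : (16 : ℝ)⁻¹ ^ (k + 1) ≤ (16 : ℝ)⁻¹ ^ 1 :=
    pow_le_pow_of_le_one (by norm_num) (by norm_num) (Nat.succ_le_succ (Nat.zero_le k))
  simpa [βf] using h1.trans (by norm_num)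

lemma βf_succ (k : ℕ) : βf (k + 1) = βf k * 16⁻¹ := by
  rw [βf, βf, pow_succ]

lemma exists_next [StandardBorelSpace X] [NullSingletonClass μ] (T : X ≃ᵐ X) (hT : Ergodic T μ)
    (ψ : ℕ → ℝ) (hψ0 : Tendsto ψ atTop (nhds 0))
    (k : ℕ) (A : Set X) (hA : MeasurableSet A) :
    ∃ (N : ℕ) (A' : Set X), MeasurableSet A' ∧ k + 1 ≤ N ∧
      ψ N ≤ βf k / (10 * (k + 1)) ∧ μ (A' ∆ A) ≤ ENNReal.ofReal (βf k) ∧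
      βf k / 4 ≤ Idev μ T N A' := by
  have ht0 : (0 : ℝ) < βf k / (10 * (k + 1)) := by
    have := βf_pos k
    positivity
  have hev : ∀ᶠ N in (atTop : Filter ℕ), ψ N ≤ βf k / (10 * (k + 1)) :=
    hψ0.eventually (eventually_le_nhds ht0)
  obtain ⟨N, hψN, hNk⟩ := (hev.and (eventually_ge_atTop (k + 1))).exists
  have hN1 : 1 ≤ N := le_trans (Nat.succ_le_succ (Nat.zero_le k)) hNk
  have hNpos : (0 : ℝ) < N := by exact_mod_cast hN1
  obtain ⟨B, hBmeas, hb1, hb2, hbd⟩ := exists_almost_invariant T hT (βf_pos k) (βf_le k)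
    (show (0 : ℝ) < βf k / (4 * N) by have h := βf_pos k; positivity)
  have hd : (N : ℝ) * (μ ((T ⁻¹' B) ∆ B)).toReal ≤ βf k / 4 := by
    have h1 : (N : ℝ) * (μ ((T ⁻¹' B) ∆ B)).toReal ≤ (N : ℝ) * (βf k / (4 * N)) :=
      mul_le_mul_of_nonneg_left hbd hNpos.le
    rw [show (N : ℝ) * (βf k / (4 * N)) = βf k / 4 by field_simp] at h1
    exact h1
  have hμB : μ B ≤ ENNReal.ofReal (βf k) := by
    rw [ENNReal.le_ofReal_iff_toReal_le (measure_ne_top μ B) (βf_pos k).le]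
    exact hb2
  rcases dev_step T hT.toMeasurePreserving hA hBmeas hN1 (βf_pos k) (βf_le k) hb1 hb2 hd with
    h | h
  · refine ⟨N, A ∪ B, hA.union hBmeas, hNk, hψN, ?_, h⟩
    refine le_trans (measure_mono fun x hx => ?_) hμB
    rcases Set.mem_symmDiff.mp hx with ⟨hx1, hx2⟩ | ⟨hx1, hx2⟩
    · exact hx1.resolve_left hx2
    · exact absurd (Or.inl hx1) hx2
  · refine ⟨N, A \ B, hA.diff hBmeas, hNk, hψN, ?_, h⟩
    refine le_trans (measure_mono fun x hx => ?_) hμB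
    rcases Set.mem_symmDiff.mp hx with ⟨hx1, hx2⟩ | ⟨hx1, hx2⟩
    · exact absurd hx1.1 hx2
    · by_contra hxB
      exact hx2 ⟨hx1, hxB⟩

end SlowAux

open SlowAux in
theorem slow_L1_convergence_of_ergodic
    {X : Type*} [MeasurableSpace X] [StandardBorelSpace X]
    (μ : Measure X) [IsProbabilityMeasure μ] [NullSingletonClass μ]
    (T : X ≃ᵐ X) (hT : Ergodic T μ)
    (ψ : ℕ → ℝ) (hψpos : ∀ N, 0 < ψ N) (hψ0 : Tendsto ψ atTop (nhds 0)) :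
    ∃ A : Set X, MeasurableSet A ∧
      ∀ C : ℝ, ∃ᶠ N in atTop,
        C < (∫ x, |birkhoffAvg T (A.indicator (fun _ => (1 : ℝ))) N x - (μ A).toReal| ∂μ)
              / ψ N := by
  classical
  have hpres : MeasurePreserving T μ μ := hT.toMeasurePreserving
  have hstep := exists_next (μ := μ) T hT ψ hψ0
  choose Nf Af hmeas hNge hψN hdist hIlow using hstep
  let G : ℕ → {A : Set X // MeasurableSet A} := fun k =>
    Nat.rec ⟨∅, MeasurableSet.empty⟩ (fun k p => ⟨Af k p.1 p.2, hmeas k p.1 p.2⟩) k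
  let Nk : ℕ → ℕ := fun k => Nf k (G k).1 (G k).2
  set Ainf : Set X := ⋃ k, ⋂ j, ⋂ (_ : k ≤ j), (G j).1 with hAinfdef
  have hAinfmeas : MeasurableSet Ainf :=
    MeasurableSet.iUnion fun k => MeasurableSet.iInter fun j =>
      MeasurableSet.iInter fun _ => (G j).2
  -- flips
  have flip : ∀ (b a : ℕ), a ≤ b → ∀ x, x ∈ ((G a).1 ∆ (G b).1) →
      ∃ j, a ≤ j ∧ x ∈ ((G j).1 ∆ (G (j + 1)).1) := by
    intro b
    induction b with
    | zero =>
      intro a ha x hx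
      obtain rfl := Nat.le_zero.mp ha
      simp [symmDiff_self] at hx
    | succ n ih =>
      intro a ha x hx
      rcases eq_or_lt_of_le ha with h | h
      · subst h
        simp [symmDiff_self] at hx
      · have han : a ≤ n := Nat.lt_succ_iff.mp h
        rcases symmDiff_triangle ((G a).1) ((G n).1) ((G (n + 1)).1) hx with h1 | h2
        · exact ih a han x h1
        · exact ⟨n, han, h2⟩
  have hsub : ∀ m, Ainf ∆ (G m).1 ⊆ ⋃ i : ℕ, ((G (m + i)).1 ∆ (G (m + i + 1)).1) := by
    intro m x hx
    have key : ∀ j, m ≤ j → x ∈ ((G j).1 ∆ (G (j + 1)).1) →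
        x ∈ ⋃ i : ℕ, ((G (m + i)).1 ∆ (G (m + i + 1)).1) := by
      intro j hj hxj
      exact Set.mem_iUnion.mpr ⟨j - m, by rwa [Nat.add_sub_cancel' hj]⟩
    rcases Set.mem_symmDiff.mp hx with ⟨hx1, hx2⟩ | ⟨hx1, hx2⟩
    · obtain ⟨k, hk⟩ := Set.mem_iUnion.mp hx1
      have hmem : ∀ j, k ≤ j → x ∈ (G j).1 := by
        intro j hj
        have := Set.mem_iInter.mp hk j
        exact Set.mem_iInter.mp this hj
      have hxk : x ∈ (G (max k m)).1 := hmem _ (le_max_left _ _)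
      have hdiff : x ∈ ((G m).1 ∆ (G (max k m)).1) :=
        Set.mem_symmDiff.mpr (Or.inr ⟨hxk, hx2⟩)
      obtain ⟨j, hj, hjx⟩ := flip (max k m) m (le_max_right _ _) x hdiff
      exact key j hj hjx
    · have hnall : ¬ ∀ j, m ≤ j → x ∈ (G j).1 := by
        intro hall
        exact hx2 (Set.mem_iUnion.mpr ⟨m, Set.mem_iInter.mpr fun j =>
          Set.mem_iInter.mpr fun hj => hall j hj⟩)
      push_neg at hnall
      obtain ⟨j, hmj, hxj⟩ := hnall
      have hdiff : x ∈ ((G m).1 ∆ (G j).1) := Set.mem_symmDiff.mpr (Or.inl ⟨hx1, hxj⟩)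
      obtain ⟨j', hj', hjx'⟩ := flip j m hmj x hdiff
      exact key j' hj' hjx'
  have hDbound : ∀ j, μ ((G j).1 ∆ (G (j + 1)).1) ≤ ENNReal.ofReal (βf j) := by
    intro j
    have := hdist j (G j).1 (G j).2
    rwa [symmDiff_comm] at this
  have htail : ∀ m, μ (Ainf ∆ (G m).1) ≤ ENNReal.ofReal (βf m * (16 / 15)) := by
    intro m
    refine le_trans (measure_mono (hsub m)) ?_
    refine le_trans (measure_iUnion_le _) ?_
    have hterm : ∀ i : ℕ, μ ((G (m + i)).1 ∆ (G (m + i + 1)).1) ≤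
        ENNReal.ofReal (βf m) * (ENNReal.ofReal 16⁻¹) ^ i := by
      intro i
      refine le_trans (hDbound (m + i)) ?_
      have hβeq : βf (m + i) = βf m * (16⁻¹ : ℝ) ^ i := by
        rw [βf, βf, show m + i + 1 = (m + 1) + i by ring, pow_add]
      rw [hβeq, ENNReal.ofReal_mul (βf_pos m).le, ENNReal.ofReal_pow (by norm_num)]
    refine le_trans (ENNReal.tsum_le_tsum hterm) ?_
    rw [ENNReal.tsum_mul_left, ENNReal.tsum_geometric]
    have h16 : (1 : ℝ≥0∞) - ENNReal.ofReal 16⁻¹ = ENNReal.ofReal (15 / 16) := by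
      rw [← ENNReal.ofReal_one, ← ENNReal.ofReal_sub _ (by norm_num : (0:ℝ) ≤ 16⁻¹)]
      norm_num
    rw [h16, ← ENNReal.ofReal_inv_of_pos (by norm_num), ← ENNReal.ofReal_mul (βf_pos m).le]
    refine ENNReal.ofReal_le_ofReal ?_
    norm_num
  have hIken : ∀ k, βf k / 10 ≤ Idev μ T (Nk k) Ainf := by
    intro k
    have h1 : βf k / 4 ≤ Idev μ T (Nk k) (G (k + 1)).1 := hIlow k (G k).1 (G k).2
    have hN1 : 1 ≤ Nk k := le_trans (Nat.succ_le_succ (Nat.zero_le k)) (hNge k (G k).1 (G k).2)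
    have hlip : Idev μ T (Nk k) (G (k + 1)).1 ≤ Idev μ T (Nk k) Ainf
        + 2 * (μ (Ainf ∆ (G (k + 1)).1)).toReal :=
      Idev_lip T hpres hAinfmeas (G (k + 1)).2 hN1
    have htr : (μ (Ainf ∆ (G (k + 1)).1)).toReal ≤ βf (k + 1) * (16 / 15) := by
      refine ENNReal.toReal_le_of_le_ofReal ?_ (htail (k + 1))
      have := βf_pos (k + 1)
      positivity
    have hval : βf (k + 1) * (16 / 15) = βf k / 15 := by
      rw [βf_succ]; ring
    rw [hval] at htr
    have := βf_pos k
    linarith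
  refine ⟨Ainf, hAinfmeas, ?_⟩
  intro C
  rw [Filter.frequently_atTop]
  intro m₀
  set k : ℕ := max m₀ ⌈C⌉₊ with hk
  refine ⟨Nk k, ?_, ?_⟩
  · calc m₀ ≤ k := le_max_left _ _
      _ ≤ k + 1 := Nat.le_succ k
      _ ≤ Nk k := hNge k (G k).1 (G k).2
  · show C < Idev μ T (Nk k) Ainf / ψ (Nk k)
    have hψk : ψ (Nk k) ≤ βf k / (10 * (k + 1)) := hψN k (G k).1 (G k).2
    have hψp := hψpos (Nk k)
    rw [lt_div_iff₀ hψp]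
    have hCk : C ≤ (k : ℝ) := le_trans (Nat.le_ceil C) (by exact_mod_cast le_max_right m₀ ⌈C⌉₊)
    have hk1 : (0 : ℝ) < (k : ℝ) + 1 := by positivity
    calc C * ψ (Nk k) ≤ (k : ℝ) * ψ (Nk k) := mul_le_mul_of_nonneg_right hCk hψp.le
      _ < ((k : ℝ) + 1) * ψ (Nk k) := by nlinarith
      _ ≤ ((k : ℝ) + 1) * (βf k / (10 * ((k : ℝ) + 1))) := by
          refine mul_le_mul_of_nonneg_left ?_ hk1.le
          exact_mod_cast hψk
      _ = βf k / 10 := by field_simp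
      _ ≤ Idev μ T (Nk k) Ainf := hIken k
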